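/- Let R be a ring, T a right R-module, E an injective cogenerator of the category of right R-modules, and let 0 → T → Q₀ →ζ→ Q₁ be an exact sequence with Q₀ and Q₁ injective. Then T is cosilting with respect to ζ if and only if the following two conditions hold: (a) T is partial cosilting with respect to ζ, and (b) there exists an exact sequence 0 → T₁ → T₀ →γ→ E of right R-modules with T₀, T₁ ∈ Prod(T), such that for every module T′ ∈ 𝓑_ζ the induced map Hom_R(T′,T₀) → Hom_R(T′,E), g ↦ γ∘g, is surjective. -/

import Mathlib

universe u v

open Function

variable (R : Type u) [Ring R]

/-- `X ∈ 𝓑_ζ`: every map `X → Q₁` factors through `ζ`. -/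
def MemB {Q₀ Q₁ : Type v} [AddCommGroup Q₀] [Module R Q₀] [AddCommGroup Q₁] [Module R Q₁]
    (ζ : Q₀ →ₗ[R] Q₁) (X : Type v) [AddCommGroup X] [Module R X] : Prop :=
  Surjective fun g : X →ₗ[R] Q₀ => ζ ∘ₗ g

/-- `X ∈ Cogen T`: `X` embeds into a direct product of copies of `T`. -/
def MemCogen (T : Type v) [AddCommGroup T] [Module R T]
    (X : Type v) [AddCommGroup X] [Module R X] : Prop :=
  ∃ (ι : Type v) (f : X →ₗ[R] (ι → T)), Injective f

/-- `X ∈ Prod T`: `X` is (isomorphic to) a direct summand of a direct product of copies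
of `T`, i.e. `X` admits a split embedding into a power of `T`. -/
def MemProd (T : Type v) [AddCommGroup T] [Module R T]
    (X : Type v) [AddCommGroup X] [Module R X] : Prop :=
  ∃ (ι : Type v) (a : X →ₗ[R] (ι → T)) (b : (ι → T) →ₗ[R] X), b ∘ₗ a = LinearMap.id

section Aux

variable {R}
variable {E Q₀ Q₁ T : Type v} [AddCommGroup E] [Module R E] [AddCommGroup Q₀] [Module R Q₀]
  [AddCommGroup Q₁] [Module R Q₁] [AddCommGroup T] [Module R T]

/-- Injectivity of products of two injective modules. -/
theorem Module.Injective.prod' [Module.Injective R E] [Module.Injective R Q₀] :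
    Module.Injective R (E × Q₀) := by
  constructor
  intro X Y _ _ _ _ i hi g
  obtain ⟨h₁, hh₁⟩ := Module.Injective.out i hi ((LinearMap.fst R E Q₀) ∘ₗ g)
  obtain ⟨h₂, hh₂⟩ := Module.Injective.out i hi ((LinearMap.snd R E Q₀) ∘ₗ g)
  exact ⟨LinearMap.prod h₁ h₂, fun x => by
    simp only [LinearMap.prod_apply, Function.prod, hh₁ x, hh₂ x]
    rfl⟩

/-- Injectivity of arbitrary products of an injective module. -/
theorem Module.Injective.pi' {ι : Type v} [Module.Injective R Q₀] :
    Module.Injective R (ι → Q₀) := by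
  constructor
  intro X Y _ _ _ _ i hi g
  choose h hh using fun j : ι =>
    Module.Injective.out i hi ((LinearMap.proj j) ∘ₗ g)
  exact ⟨LinearMap.pi h, fun x => funext fun j => hh j x⟩

variable (ζ : Q₀ →ₗ[R] Q₁) (f : T →ₗ[R] Q₀)

/-- The pullback of `ζ^H : Q₀^H → Q₁^H` along the canonical map `E → Q₁^H`,
where `H = Hom(E, Q₁)`. -/
def WSub (E : Type v) [AddCommGroup E] [Module R E] :
    Submodule R (E × ((E →ₗ[R] Q₁) → Q₀)) where
  carrier := {p | ∀ h : E →ₗ[R] Q₁, h p.1 = ζ (p.2 h)}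
  add_mem' := by
    intro a b ha hb h
    simp only [Prod.fst_add, Prod.snd_add, map_add, Pi.add_apply, ha h, hb h]
  zero_mem' := by intro h; simp
  smul_mem' := by
    intro c a ha h
    simp only [Prod.smul_fst, Prod.smul_snd, map_smul, Pi.smul_apply, ha h]

theorem mem_WSub {p : E × ((E →ₗ[R] Q₁) → Q₀)} :
    p ∈ WSub ζ E ↔ ∀ h : E →ₗ[R] Q₁, h p.1 = ζ (p.2 h) := Iff.rfl

/-- First projection `W → E`. -/
def gammaW : ↥(WSub ζ E) →ₗ[R] E :=
  (LinearMap.fst R E _) ∘ₗ (WSub ζ E).subtype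

/-- Second projection `W → Q₀^H`. -/
def piW : ↥(WSub ζ E) →ₗ[R] ((E →ₗ[R] Q₁) → Q₀) :=
  (LinearMap.snd R E _) ∘ₗ (WSub ζ E).subtype

@[simp] theorem gammaW_apply (w : ↥(WSub ζ E)) : gammaW ζ w = w.1.1 := rfl
@[simp] theorem piW_apply (w : ↥(WSub ζ E)) : piW ζ w = w.1.2 := rfl

/-- The embedding `T^H → W`. -/
def jW (hfk : ∀ t : T, ζ (f t) = 0) : ((E →ₗ[R] Q₁) → T) →ₗ[R] ↥(WSub ζ E) :=
  LinearMap.codRestrict (WSub ζ E)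
    (LinearMap.prod 0 (LinearMap.pi fun h => f ∘ₗ LinearMap.proj h))
    (by
      intro t h
      simp only [LinearMap.prod_apply, Function.prod, LinearMap.zero_apply, map_zero,
        LinearMap.pi_apply, LinearMap.comp_apply, LinearMap.proj_apply]
      exact (hfk (t h)).symm)

theorem jW_apply (hfk : ∀ t : T, ζ (f t) = 0) (t : (E →ₗ[R] Q₁) → T) :
    ((jW ζ f hfk t : ↥(WSub ζ E)) : E × ((E →ₗ[R] Q₁) → Q₀)) = (0, fun h => f (t h)) := rfl

theorem jW_injective (hf : Injective f) (hfk : ∀ t : T, ζ (f t) = 0) :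
    Injective (jW (E := E) ζ f hfk) := by
  intro a b hab
  have : ((jW ζ f hfk a : ↥(WSub ζ E)) : E × ((E →ₗ[R] Q₁) → Q₀)) = jW ζ f hfk b :=
    congrArg _ hab
  rw [jW_apply, jW_apply] at this
  funext h
  exact hf (congrFun (congrArg Prod.snd this) h)

theorem range_jW (hf : Injective f) (hex : LinearMap.range f = LinearMap.ker ζ)
    (hfk : ∀ t : T, ζ (f t) = 0) :
    LinearMap.range (jW (E := E) ζ f hfk) = LinearMap.ker (gammaW ζ) := by
  ext w
  constructor
  · rintro ⟨t, rfl⟩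
    show gammaW ζ _ = 0
    rw [gammaW_apply, jW_apply]
  · intro hw
    have hw1 : w.1.1 = 0 := hw
    have hker : ∀ h : E →ₗ[R] Q₁, w.1.2 h ∈ LinearMap.ker ζ := by
      intro h
      have := (w.2 h).symm
      rw [hw1, map_zero] at this
      exact this
    have hmem : ∀ h : E →ₗ[R] Q₁, ∃ t : T, f t = w.1.2 h := by
      intro h
      have : w.1.2 h ∈ LinearMap.range f := by rw [hex]; exact hker h
      exact this
    refine ⟨fun h => (hmem h).choose, ?_⟩
    apply Subtype.ext
    rw [jW_apply]
    refine Prod.ext hw1.symm ?_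
    funext h
    exact (hmem h).choose_spec

/-- Every map from a module of `𝓑` to `E` factors through `γ_W : W → E`. -/
theorem factor_through_gammaW (T' : Type v) [AddCommGroup T'] [Module R T']
    (hT' : MemB R ζ T') :
    Surjective fun g : T' →ₗ[R] ↥(WSub ζ E) => gammaW ζ ∘ₗ g := by
  intro ψ
  choose L hL using fun h : E →ₗ[R] Q₁ => hT' (h ∘ₗ ψ)
  refine ⟨LinearMap.codRestrict (WSub ζ E) (LinearMap.prod ψ (LinearMap.pi L)) ?_, ?_⟩
  · intro x h
    simpa using (LinearMap.congr_fun (hL h) x).symm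
  · ext x
    rfl


theorem memB_WSub [Module.Injective R E] [Module.Injective R Q₀] [Module.Injective R Q₁]
    (hf : Injective f) (hex : LinearMap.range f = LinearMap.ker ζ)
    (hTpow : Surjective fun g : ((E →ₗ[R] Q₁) → T) →ₗ[R] Q₀ => ζ ∘ₗ g) :
    Surjective fun g : ↥(WSub ζ E) →ₗ[R] Q₀ => ζ ∘ₗ g := by
  classical
  intro φ
  -- extend φ to the ambient module
  obtain ⟨Φ, hΦ⟩ := Module.Injective.out (WSub ζ E).subtype Subtype.val_injective φ
  set ΦE : E →ₗ[R] Q₁ := Φ ∘ₗ LinearMap.inl R E ((E →ₗ[R] Q₁) → Q₀) with hΦE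
  set ΦQ : ((E →ₗ[R] Q₁) → Q₀) →ₗ[R] Q₁ := Φ ∘ₗ LinearMap.inr R E ((E →ₗ[R] Q₁) → Q₀) with hΦQ
  -- ζ^(E →ₗ[R] Q₁) and its kernel TH ≅ T^(E →ₗ[R] Q₁)
  set ζH : ((E →ₗ[R] Q₁) → Q₀) →ₗ[R] ((E →ₗ[R] Q₁) → Q₁) := LinearMap.pi (fun h => ζ ∘ₗ LinearMap.proj h) with hζH
  set TH := LinearMap.ker ζH with hTH
  -- the iso ((E →ₗ[R] Q₁) → T) ≃ TH
  have hTHmem : ∀ t : (E →ₗ[R] Q₁) → T, (fun h => f (t h)) ∈ TH := by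
    intro t
    have : ∀ h : (E →ₗ[R] Q₁), ζ (f (t h)) = 0 := by
      intro h
      have : f (t h) ∈ LinearMap.ker ζ := hex ▸ LinearMap.mem_range_self f (t h)
      exact this
    funext h
    simp [hζH, this h]
  set u : ((E →ₗ[R] Q₁) → T) →ₗ[R] TH :=
    LinearMap.codRestrict TH (LinearMap.pi fun h => f ∘ₗ LinearMap.proj h)
      (fun t => hTHmem t) with hu
  have hu_bij : Bijective u := by
    constructor
    · intro a b hab
      funext h
      exact hf (congrFun (congrArg Subtype.val hab) h)
    · rintro ⟨q, hq⟩
      have hq' : ∀ h : (E →ₗ[R] Q₁), q h ∈ LinearMap.ker ζ := by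
        intro h
        exact congrFun (hq : ζH q = 0) h
      have hq'' : ∀ h : (E →ₗ[R] Q₁), ∃ t, f t = q h := by
        intro h
        have : q h ∈ LinearMap.range f := hex ▸ hq' h
        exact this
      exact ⟨fun h => (hq'' h).choose, Subtype.ext (funext fun h => (hq'' h).choose_spec)⟩
  set uEquiv := LinearEquiv.ofBijective u hu_bij with huEquiv
  -- lift ΦQ on TH using that T^(E →ₗ[R] Q₁) ∈ 𝓑
  obtain ⟨L, hLspec⟩ := hTpow ((ΦQ ∘ₗ TH.subtype) ∘ₗ (uEquiv : ((E →ₗ[R] Q₁) → T) →ₗ[R] TH))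
  set α : TH →ₗ[R] Q₀ := L ∘ₗ (uEquiv.symm : TH →ₗ[R] ((E →ₗ[R] Q₁) → T)) with hα
  have hαspec : ∀ q : TH, ζ (α q) = ΦQ q := by
    intro q
    have := LinearMap.congr_fun hLspec (uEquiv.symm q)
    simp only [LinearMap.comp_apply] at this ⊢
    rw [hα]
    simp only [LinearMap.comp_apply, LinearEquiv.coe_coe] at this ⊢
    rw [this, LinearEquiv.apply_symm_apply]
    rfl
  -- extend α to the whole of Q₀^(E →ₗ[R] Q₁)
  obtain ⟨αbar, hαbar⟩ := Module.Injective.out TH.subtype Subtype.val_injective α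
  -- Ξ kills TH
  set Ξ : ((E →ₗ[R] Q₁) → Q₀) →ₗ[R] Q₁ := ΦQ - ζ ∘ₗ αbar with hΞ
  have hΞker : TH ≤ LinearMap.ker Ξ := by
    intro q hq
    have : αbar q = α ⟨q, hq⟩ := hαbar ⟨q, hq⟩
    simp only [hΞ, LinearMap.mem_ker, LinearMap.sub_apply, LinearMap.comp_apply, this,
      hαspec ⟨q, hq⟩, sub_self]
  -- factor Ξ through ζH
  set Ξq : (((E →ₗ[R] Q₁) → Q₀) ⧸ TH) →ₗ[R] Q₁ := TH.liftQ Ξ hΞker with hΞq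
  set eq0 : (((E →ₗ[R] Q₁) → Q₀) ⧸ LinearMap.ker ζH) ≃ₗ[R] ↥(LinearMap.range ζH) :=
    ζH.quotKerEquivRange with heq0
  set Ξ0 : ↥(LinearMap.range ζH) →ₗ[R] Q₁ := Ξq ∘ₗ (eq0.symm : _ →ₗ[R] _) with hΞ0
  obtain ⟨Ξhat, hΞhat⟩ :=
    Module.Injective.out (LinearMap.range ζH).subtype Subtype.val_injective Ξ0
  have hΞhat_spec : ∀ q : (E →ₗ[R] Q₁) → Q₀, Ξhat (ζH q) = Ξ q := by
    intro q
    have h1 : Ξhat (ζH q) = Ξ0 ⟨ζH q, LinearMap.mem_range_self _ q⟩ :=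
      hΞhat ⟨ζH q, LinearMap.mem_range_self _ q⟩
    rw [h1, hΞ0]
    simp only [LinearMap.comp_apply, LinearEquiv.coe_coe]
    have h2 : eq0.symm ⟨ζH q, LinearMap.mem_range_self _ q⟩ =
        Submodule.Quotient.mk (p := TH) q := by
      rw [LinearEquiv.symm_apply_eq]
      exact Subtype.ext rfl
    rw [h2]
    exact Submodule.liftQ_apply TH Ξ q (h := hΞker)
  -- the canonical map c : E → Q₁^(E →ₗ[R] Q₁) and h* = Ξhat ∘ c
  set c : E →ₗ[R] ((E →ₗ[R] Q₁) → Q₁) := LinearMap.pi (fun h : (E →ₗ[R] Q₁) => h) with hc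
  set hstar : E →ₗ[R] Q₁ := Ξhat ∘ₗ c with hhstar
  -- the lift
  set π₂ : ↥(WSub ζ E) →ₗ[R] ((E →ₗ[R] Q₁) → Q₀) :=
    (LinearMap.snd R E _) ∘ₗ (WSub ζ E).subtype with hπ₂
  refine ⟨(LinearMap.proj (R := R) (φ := fun _ : (E →ₗ[R] Q₁) => Q₀) ΦE
      + LinearMap.proj (R := R) (φ := fun _ : (E →ₗ[R] Q₁) => Q₀) hstar) ∘ₗ π₂ + αbar ∘ₗ π₂, ?_⟩
  ext w
  obtain ⟨⟨e, q⟩, hw⟩ := w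
  have hwrel : ∀ h : (E →ₗ[R] Q₁), h e = ζ (q h) := hw
  simp only [LinearMap.comp_apply, LinearMap.add_apply, LinearMap.proj_apply, map_add]
  have hπ₂w : π₂ ⟨(e, q), hw⟩ = q := rfl
  rw [hπ₂w]
  have e1 : ζ (q ΦE) = ΦE e := (hwrel ΦE).symm
  have e2 : ζ (q hstar) = ΦQ q - ζ (αbar q) := by
    have hce : c e = ζH q := by
      funext h
      exact hwrel h
    have h3 : ζ (q hstar) = hstar e := (hwrel hstar).symm
    rw [h3, hhstar]
    simp only [LinearMap.comp_apply]
    rw [hce, hΞhat_spec q, hΞ]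
    simp only [LinearMap.sub_apply, LinearMap.comp_apply]
  rw [e1, e2]
  have efinal : ΦE e + ΦQ q = φ ⟨(e, q), hw⟩ := by
    have := hΦ ⟨(e, q), hw⟩
    simp only [Submodule.coe_subtype] at this
    rw [← this]
    have hsplit : ((e, q) : E × ((E →ₗ[R] Q₁) → Q₀)) = (e, 0) + (0, q) := by
      simp
    rw [hsplit, map_add, hΦE, hΦQ]
    rfl
  rw [← efinal]
  abel

theorem memProd_WSub [Module.Injective R E] [Module.Injective R Q₀]
    (hf : Injective f) (hex : LinearMap.range f = LinearMap.ker ζ)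
    (hWcogen : ∃ (ι : Type v) (g : ↥(WSub ζ E) →ₗ[R] (ι → T)), Injective g)
    (hpowB : ∀ ι : Type v, Surjective fun g : (ι → T) →ₗ[R] Q₀ => ζ ∘ₗ g) :
    ∃ (ι : Type v) (a : ↥(WSub ζ E) →ₗ[R] (ι → T))
      (b : (ι → T) →ₗ[R] ↥(WSub ζ E)), b ∘ₗ a = LinearMap.id := by
  classical
  obtain ⟨ι₀, f₀, hf₀⟩ := hWcogen
  set W := ↥(WSub ζ E) with hW
  set γ : W →ₗ[R] E := (LinearMap.fst R E _) ∘ₗ (WSub ζ E).subtype with hγ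
  set π₂ : W →ₗ[R] ((E →ₗ[R] Q₁) → Q₀) :=
    (LinearMap.snd R E _) ∘ₗ (WSub ζ E).subtype with hπ₂
  set cν : W →ₗ[R] ((W →ₗ[R] T) → T) := LinearMap.pi (fun ψ : W →ₗ[R] T => ψ) with hcν
  have hcνinj : Injective cν := by
    intro a b hab
    apply hf₀
    funext i
    have : ∀ ψ : W →ₗ[R] T, ψ a = ψ b := fun ψ => congrFun hab ψ
    exact this ((LinearMap.proj i) ∘ₗ f₀)
  obtain ⟨ehat, hehat⟩ := Module.Injective.out cν hcνinj γ
  have hQpi : Module.Injective R ((E →ₗ[R] Q₁) → Q₀) := by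
    constructor
    intro X Y _ _ _ _ i hi g
    choose h hh using fun j => Module.Injective.out i hi ((LinearMap.proj j) ∘ₗ g)
    exact ⟨LinearMap.pi h, fun x => funext fun j => hh j x⟩
  obtain ⟨phat, hphat⟩ := hQpi.out cν hcνinj π₂
  set δ : (E →ₗ[R] Q₁) → (((W →ₗ[R] T) → T) →ₗ[R] Q₁) :=
    fun h => h ∘ₗ ehat - ζ ∘ₗ ((LinearMap.proj h) ∘ₗ phat) with hδ
  choose cc hcc using fun h => hpowB (W →ₗ[R] T) (δ h)
  have hccx : ∀ (h : E →ₗ[R] Q₁) x, ζ (cc h x) = h (ehat x) - ζ (phat x h) := by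
    intro h x
    have := LinearMap.congr_fun (hcc h) x
    simpa [hδ] using this
  set r' : ((W →ₗ[R] T) → T) →ₗ[R] (E × ((E →ₗ[R] Q₁) → Q₀)) :=
    LinearMap.prod ehat (LinearMap.pi (fun h => (LinearMap.proj h) ∘ₗ phat + cc h)) with hr'
  have hmem : ∀ x, r' x ∈ WSub ζ E := by
    intro x h
    show h (ehat x) = ζ (phat x h + cc h x)
    rw [map_add, hccx h x]
    abel
  set rW : ((W →ₗ[R] T) → T) →ₗ[R] W := LinearMap.codRestrict _ r' hmem with hrW
  have hccν : ∀ (h : E →ₗ[R] Q₁) (w : W), cc h (cν w) ∈ LinearMap.range f := by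
    intro h w
    rw [hex]
    show ζ (cc h (cν w)) = 0
    rw [hccx h (cν w), hehat w, hphat w]
    have hrel : h (γ w) = ζ (π₂ w h) := w.2 h
    rw [hrel]
    abel
  set eqf := LinearEquiv.ofInjective f hf with heqf
  set d : (E →ₗ[R] Q₁) → (W →ₗ[R] T) := fun h =>
    (eqf.symm : ↥(LinearMap.range f) →ₗ[R] T) ∘ₗ
      LinearMap.codRestrict (LinearMap.range f) ((cc h) ∘ₗ cν) (hccν h) with hd
  have hfd : ∀ (h : E →ₗ[R] Q₁) (w : W), f (d h w) = cc h (cν w) := by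
    intro h w
    have h1 : eqf (d h w) = ⟨cc h (cν w), hccν h w⟩ := by
      simp only [hd, LinearMap.comp_apply, LinearEquiv.coe_coe]
      rw [LinearEquiv.apply_symm_apply]
      rfl
    have h2 := congrArg Subtype.val h1
    simp only [heqf, LinearEquiv.ofInjective_apply] at h2
    exact h2
  set D : (((W →ₗ[R] T) → T)) →ₗ[R] ((E →ₗ[R] Q₁) → T) :=
    LinearMap.pi (fun h => LinearMap.proj (R := R) (φ := fun _ : (W →ₗ[R] T) => T) (d h))
    with hD
  have hfk : ∀ (t : (E →ₗ[R] Q₁) → T) h, ζ (f (t h)) = 0 := by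
    intro t h
    have : f (t h) ∈ LinearMap.ker ζ := hex ▸ LinearMap.mem_range_self f (t h)
    exact this
  set jw : ((E →ₗ[R] Q₁) → T) →ₗ[R] W :=
    LinearMap.codRestrict (WSub ζ E)
      (LinearMap.prod 0 (LinearMap.pi fun h => f ∘ₗ LinearMap.proj h))
      (by
        intro t h
        show h 0 = ζ (f (t h))
        rw [map_zero, hfk t h]) with hjw
  refine ⟨W →ₗ[R] T, cν, rW - jw ∘ₗ D, ?_⟩
  apply LinearMap.ext
  intro w
  apply Subtype.ext
  have key : ((rW - jw ∘ₗ D) (cν w) : E × ((E →ₗ[R] Q₁) → Q₀))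
      = (ehat (cν w) - 0, fun h => (phat (cν w) h + cc h (cν w)) - f (d h w)) := rfl
  rw [LinearMap.comp_apply, key]
  show _ = (w : E × ((E →ₗ[R] Q₁) → Q₀))
  refine Prod.ext ?_ ?_
  · show ehat (cν w) - 0 = w.1.1
    rw [hehat w, sub_zero]
    rfl
  · show (fun h => (phat (cν w) h + cc h (cν w)) - f (d h w)) = w.1.2
    funext h
    rw [hfd h w, hphat w]
    show π₂ w h + cc h (cν w) - cc h (cν w) = w.1.2 h
    rw [add_sub_cancel_right]
    rfl

end Aux

/-- Main characterization of cosilting modules: given an injective cogenerator `E` and an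
injective copresentation `0 → T → Q₀ →ζ→ Q₁`, the module `T` is cosilting with respect to `ζ`
iff (a) `T` is partial cosilting with respect to `ζ`, and (b) there is an exact sequence
`0 → T₁ → T₀ →γ→ E` with `T₀, T₁ ∈ Prod T` such that `Hom(T', γ)` is epic for all
`T' ∈ 𝓑_ζ`. -/
theorem stmt_12
    (E : Type v) [AddCommGroup E] [Module R E] [Module.Injective R E]
    (hcog : ∀ (N : Type v) [AddCommGroup N] [Module R N],
      ∃ (ι : Type v) (f : N →ₗ[R] (ι → E)), Injective f)
    {Q₀ Q₁ : Type v} [AddCommGroup Q₀] [Module R Q₀] [AddCommGroup Q₁] [Module R Q₁]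
    (ζ : Q₀ →ₗ[R] Q₁) [Module.Injective R Q₀] [Module.Injective R Q₁]
    (T : Type v) [AddCommGroup T] [Module R T]
    (f : T →ₗ[R] Q₀) (hf : Injective f) (hex : LinearMap.range f = LinearMap.ker ζ) :
    (∀ (X : Type v) [AddCommGroup X] [Module R X], MemCogen R T X ↔ MemB R ζ X) ↔
    ((MemB R ζ T ∧
       ∀ (ι : Type v) (N : ι → Type v) [∀ i, AddCommGroup (N i)] [∀ i, Module R (N i)],
         (∀ i, MemB R ζ (N i)) → MemB R ζ (∀ i, N i)) ∧
     ∃ (T₁ T₀ : Type v) (_ : AddCommGroup T₁) (_ : Module R T₁)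
       (_ : AddCommGroup T₀) (_ : Module R T₀),
       MemProd R T T₁ ∧ MemProd R T T₀ ∧
       ∃ (j : T₁ →ₗ[R] T₀) (γ : T₀ →ₗ[R] E),
         Injective j ∧ LinearMap.range j = LinearMap.ker γ ∧
         ∀ (T' : Type v) [AddCommGroup T'] [Module R T'], MemB R ζ T' →
           Surjective fun g : T' →ₗ[R] T₀ => γ ∘ₗ g) := by
  constructor
  · -- Forward direction: cosilting ⟹ (a) ∧ (b)
    intro hyp
    classical
    have hTB : MemB R ζ T := (hyp T).mp
      ⟨PUnit, LinearMap.pi (fun _ => LinearMap.id),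
        fun a b hab => congrFun hab PUnit.unit⟩
    have hpowB : ∀ ι : Type v, MemB R ζ (ι → T) := fun ι =>
      (hyp _).mp ⟨ι, LinearMap.id, fun a b h => h⟩
    have hfk : ∀ t : T, ζ (f t) = 0 := by
      intro t
      have : f t ∈ LinearMap.ker ζ := hex ▸ LinearMap.mem_range_self f t
      exact this
    refine ⟨⟨hTB, ?_⟩, ?_⟩
    · -- 𝓑 is closed under direct products
      intro ι N _ _ hN
      apply (hyp _).mp
      choose κ g hg using fun i => (hyp (N i)).mpr (hN i)
      refine ⟨Sigma κ, LinearMap.pi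
        (fun s : Sigma κ => (LinearMap.proj s.2) ∘ₗ ((g s.1) ∘ₗ (LinearMap.proj s.1))), ?_⟩
      intro a b hab
      funext i
      apply hg i
      funext k
      exact congrFun hab ⟨i, k⟩
    · -- the approximation sequence 0 → T^H → W → E
      have hWB : MemB R ζ ↥(WSub ζ E) := memB_WSub ζ f hf hex (hpowB _)
      obtain ⟨ι₁, a1, b1, hab1⟩ :=
        memProd_WSub ζ f hf hex ((hyp _).mpr hWB) hpowB
      refine ⟨(E →ₗ[R] Q₁) → T, ↥(WSub ζ E), inferInstance, inferInstance,
        inferInstance, inferInstance,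
        ⟨(E →ₗ[R] Q₁), LinearMap.id, LinearMap.id, LinearMap.id_comp _⟩,
        ⟨ι₁, a1, b1, hab1⟩,
        jW ζ f hfk, gammaW ζ, jW_injective ζ f hf hfk, range_jW ζ f hf hex hfk, ?_⟩
      intro T' _ _ hT'
      exact factor_through_gammaW ζ T' hT'
  · -- Reverse direction: (a) ∧ (b) ⟹ cosilting
    rintro ⟨⟨hTB, hprod⟩, T₁, T₀, i1, i2, i3, i4, hP1, hP0, j, γ, hjinj, hjrange, hfac⟩
    intro X _ _
    classical
    constructor
    · rintro ⟨ι, e, he⟩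
      have hpow : MemB R ζ (ι → T) := hprod ι (fun _ => T) (fun _ => hTB)
      intro φ
      obtain ⟨Φ, hΦ⟩ := Module.Injective.out e he φ
      obtain ⟨G, hG⟩ := hpow Φ
      refine ⟨G ∘ₗ e, ?_⟩
      ext x
      have h1 := LinearMap.congr_fun hG (e x)
      simp only [LinearMap.comp_apply] at h1 ⊢
      rw [h1, hΦ x]
    · intro hX
      obtain ⟨κ, u2, hu⟩ := hcog X
      choose gk hgk using fun k : κ => hfac X hX ((LinearMap.proj k) ∘ₗ u2)
      obtain ⟨ι₀, a₀, b₀, hab⟩ := hP0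
      refine ⟨κ × ι₀,
        LinearMap.pi (fun p : κ × ι₀ => (LinearMap.proj p.2) ∘ₗ (a₀ ∘ₗ (gk p.1))), ?_⟩
      intro x y hxy
      apply hu
      funext k
      have ha : a₀ (gk k x) = a₀ (gk k y) := by
        funext i
        exact congrFun hxy (k, i)
      have hb : gk k x = gk k y := by
        have hx' := LinearMap.congr_fun hab (gk k x)
        have hy' := LinearMap.congr_fun hab (gk k y)
        simp only [LinearMap.comp_apply, LinearMap.id_apply] at hx' hy'
        rw [← hx', ← hy', ha]
      have hgx := LinearMap.congr_fun (hgk k) x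
      have hgy := LinearMap.congr_fun (hgk k) y
      simp only [LinearMap.comp_apply, LinearMap.proj_apply] at hgx hgy
      rw [← hgx, ← hgy, hb]
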